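/- Let G be a finite subgroup of U(d) and let G' be the subgroup of U(d) generated by G together with all matrices ζI where ζ ranges over the |G|-th roots of unity. Then a unitary N ∈ U(d) is a projective normaliser of G if and only if N is a linear normaliser of G', i.e. N G' N† = G'. -/

import Mathlib

open Matrix

/-- `N` is a projective normaliser of the set of matrices `S`. -/
def ProjNorm {n : Type*} [Fintype n] (N : Matrix n n ℂ) (S : Set (Matrix n n ℂ)) : Prop :=
  ∀ g ∈ S, ∃ g' ∈ S, ∃ c : ℂ, ‖c‖ = 1 ∧ N * g * Nᴴ = c • g'

/-- Lagrange's theorem for a finite set of unitary matrices closed under the group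
operations: every element raised to the cardinality of the set is the identity. -/
lemma lagrange_aux {d : ℕ} (G : Set (Matrix (Fin d) (Fin d) ℂ))
    (hfin : G.Finite)
    (hunitary : ∀ g ∈ G, g ∈ Matrix.unitaryGroup (Fin d) ℂ)
    (hone : (1 : Matrix (Fin d) (Fin d) ℂ) ∈ G)
    (hmul : ∀ a ∈ G, ∀ b ∈ G, a * b ∈ G)
    (hinv : ∀ a ∈ G, aᴴ ∈ G)
    {g : Matrix (Fin d) (Fin d) ℂ} (hg : g ∈ G) : g ^ G.ncard = 1 := by
  let H : Subgroup (Matrix.unitaryGroup (Fin d) ℂ) :=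
    { carrier := {u | (u : Matrix (Fin d) (Fin d) ℂ) ∈ G}
      one_mem' := hone
      mul_mem' := fun {a b} ha hb => hmul _ ha _ hb
      inv_mem' := fun {a} ha => by
        show ((a⁻¹ : Matrix.unitaryGroup (Fin d) ℂ) : Matrix (Fin d) (Fin d) ℂ) ∈ G
        have : ((a⁻¹ : Matrix.unitaryGroup (Fin d) ℂ) : Matrix (Fin d) (Fin d) ℂ)
            = (a : Matrix (Fin d) (Fin d) ℂ)ᴴ := rfl
        rw [this]; exact hinv _ ha }
  have e : H ≃ G :=
    { toFun := fun u => ⟨u.val.val, u.2⟩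
      invFun := fun x => ⟨⟨x.val, hunitary _ x.2⟩, x.2⟩
      left_inv := fun u => by ext; rfl
      right_inv := fun x => rfl }
  haveI : Finite G := hfin.to_subtype
  haveI : Finite H := Finite.of_equiv _ e.symm
  have hcard : Nat.card H = G.ncard := by
    rw [Nat.card_congr e, Nat.card_coe_set_eq]
  have key : (⟨⟨g, hunitary _ hg⟩, hg⟩ : H) ^ Nat.card H = 1 := pow_card_eq_one'
  have key2 : g ^ Nat.card H = 1 := by
    have h1 : ((((⟨⟨g, hunitary _ hg⟩, hg⟩ : H) ^ Nat.card H : H) :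
        Matrix.unitaryGroup (Fin d) ℂ) : Matrix (Fin d) (Fin d) ℂ) = g ^ Nat.card H := by
      rw [SubgroupClass.coe_pow, SubmonoidClass.coe_pow]
    rw [key] at h1
    rw [OneMemClass.coe_one, OneMemClass.coe_one] at h1
    exact h1.symm
  rwa [hcard] at key2

/-- Conjugation by a unitary commutes with powers. -/
lemma conj_pow_aux {d : ℕ} {N g : Matrix (Fin d) (Fin d) ℂ}
    (h1 : Nᴴ * N = 1) (h2 : N * Nᴴ = 1) (k : ℕ) :
    (N * g * Nᴴ) ^ k = N * g ^ k * Nᴴ := by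
  induction k with
  | zero => simp [h2]
  | succ k ih =>
    rw [pow_succ, ih, pow_succ]
    calc N * g ^ k * Nᴴ * (N * g * Nᴴ) = N * (g ^ k * (Nᴴ * N) * g) * Nᴴ := by
          simp only [Matrix.mul_assoc]
      _ = N * (g ^ k * g) * Nᴴ := by rw [h1, Matrix.mul_one]

/-- Let G be a finite subgroup of U(d) and let G' be the subgroup of U(d)
generated by G together with all matrices ζI where ζ ranges over the |G|-th roots of
unity.  Then a unitary N ∈ U(d) is a projective normaliser of G iff N is a linear
normaliser of G', i.e. N G' N† = G'. -/
theorem stmt_8 {d : ℕ} (G : Set (Matrix (Fin d) (Fin d) ℂ))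
    (hfin : G.Finite)
    (hunitary : ∀ g ∈ G, g ∈ Matrix.unitaryGroup (Fin d) ℂ)
    (hone : (1 : Matrix (Fin d) (Fin d) ℂ) ∈ G)
    (hmul : ∀ a ∈ G, ∀ b ∈ G, a * b ∈ G)
    (hinv : ∀ a ∈ G, aᴴ ∈ G)
    (G' : Set (Matrix (Fin d) (Fin d) ℂ))
    (hG' : G' = (Submonoid.closure
      (G ∪ {x | ∃ ζ : ℂ, ζ ^ G.ncard = 1 ∧ x = ζ • (1 : Matrix (Fin d) (Fin d) ℂ)}) :
        Submonoid (Matrix (Fin d) (Fin d) ℂ)))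
    (N : Matrix (Fin d) (Fin d) ℂ) (hN : N ∈ Matrix.unitaryGroup (Fin d) ℂ) :
    ProjNorm N G ↔ (fun g => N * g * Nᴴ) '' G' = G' := by
  -- notation
  set n := G.ncard with hn
  have hN1 : Nᴴ * N = 1 := hN.1
  have hN2 : N * Nᴴ = 1 := hN.2
  -- trivial case d = 0
  rcases eq_or_ne d 0 with hd | hd
  · subst hd
    haveI : Subsingleton (Matrix (Fin 0) (Fin 0) ℂ) :=
      ⟨fun a b => by ext i j; exact i.elim0⟩
    apply iff_of_true
    · intro g hg
      exact ⟨g, hg, 1, by simp, Subsingleton.elim _ _⟩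
    · ext z
      constructor
      · rintro ⟨y, hy, rfl⟩
        show N * y * Nᴴ ∈ G'
        rwa [Subsingleton.elim (N * y * Nᴴ) y]
      · intro hz
        exact ⟨z, hz, Subsingleton.elim _ _⟩
  -- main case
  have hn0 : 0 < n := (Set.ncard_pos hfin).mpr ⟨1, hone⟩
  have i0 : Fin d := ⟨0, Nat.pos_of_ne_zero hd⟩
  -- the explicit description of G'
  set G'' : Set (Matrix (Fin d) (Fin d) ℂ) :=
    {x | ∃ ζ : ℂ, ζ ^ n = 1 ∧ ∃ g ∈ G, x = ζ • g} with hG''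
  have hkey : G' = G'' := by
    rw [hG']
    apply le_antisymm
    · intro x hx
      refine Submonoid.closure_induction ?_ ?_ ?_ hx
      · rintro y (hy | ⟨ζ, hζ, rfl⟩)
        · exact ⟨1, one_pow n, y, hy, (one_smul ℂ y).symm⟩
        · exact ⟨ζ, hζ, 1, hone, rfl⟩
      · exact ⟨1, one_pow n, 1, hone, (one_smul ℂ _).symm⟩
      · rintro a b _ _ ⟨ζ, hζ, g, hg, rfl⟩ ⟨ξ, hξ, h, hh, rfl⟩
        refine ⟨ζ * ξ, by rw [mul_pow, hζ, hξ, one_mul], g * h, hmul _ hg _ hh, ?_⟩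
        rw [smul_mul_assoc, mul_smul_comm, smul_smul]
    · rintro x ⟨ζ, hζ, g, hg, rfl⟩
      have h1 : (ζ • (1 : Matrix (Fin d) (Fin d) ℂ)) ∈
          Submonoid.closure (G ∪ {x | ∃ ζ : ℂ, ζ ^ n = 1 ∧
            x = ζ • (1 : Matrix (Fin d) (Fin d) ℂ)}) :=
        Submonoid.subset_closure (Or.inr ⟨ζ, hζ, rfl⟩)
      have h2 : g ∈ Submonoid.closure (G ∪ {x | ∃ ζ : ℂ, ζ ^ n = 1 ∧
            x = ζ • (1 : Matrix (Fin d) (Fin d) ℂ)}) :=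
        Submonoid.subset_closure (Or.inl hg)
      have : ζ • g = (ζ • (1 : Matrix (Fin d) (Fin d) ℂ)) * g := by
        rw [smul_mul_assoc, Matrix.one_mul]
      rw [this]
      exact mul_mem h1 h2
  rw [hkey]
  -- finiteness of G''
  have hroots : {ζ : ℂ | ζ ^ n = 1}.Finite := by
    apply Set.Finite.subset (Polynomial.nthRoots n (1 : ℂ)).toFinset.finite_toSet
    intro x hx
    rw [Finset.mem_coe, Multiset.mem_toFinset, Polynomial.mem_nthRoots hn0]
    exact hx
  have hfinG'' : G''.Finite := by
    apply Set.Finite.subset (Set.Finite.image2 (· • ·) hroots hfin)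
    rintro x ⟨ζ, hζ, g, hg, rfl⟩
    exact ⟨ζ, hζ, g, hg, rfl⟩
  -- injectivity of conjugation
  have hinj : Function.Injective (fun g => N * g * Nᴴ) := by
    intro a b hab
    have cancel : ∀ x : Matrix (Fin d) (Fin d) ℂ, Nᴴ * (N * x * Nᴴ) * N = x := by
      intro x
      calc Nᴴ * (N * x * Nᴴ) * N = (Nᴴ * N) * x * (Nᴴ * N) := by
            simp only [Matrix.mul_assoc]
        _ = x := by rw [hN1, Matrix.one_mul, Matrix.mul_one]
    have := congrArg (fun y => Nᴴ * y * N) hab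
    simpa only [cancel] using this
  constructor
  · -- forward direction
    intro hPN
    have hsub : (fun g => N * g * Nᴴ) '' G'' ⊆ G'' := by
      rintro _ ⟨x, ⟨ζ, hζ, g, hg, rfl⟩, rfl⟩
      obtain ⟨g', hg', c, _, hEq⟩ := hPN g hg
      have hcn : c ^ n = 1 := by
        have e1 : (N * g * Nᴴ) ^ n = 1 := by
          rw [conj_pow_aux hN1 hN2, lagrange_aux G hfin hunitary hone hmul hinv hg,
            Matrix.mul_one, hN2]
        have e2 : (c • g') ^ n = c ^ n • (1 : Matrix (Fin d) (Fin d) ℂ) := by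
          rw [smul_pow, lagrange_aux G hfin hunitary hone hmul hinv hg']
        rw [hEq, e2] at e1
        have := congrFun (congrFun e1 i0) i0
        simpa [Matrix.smul_apply, Matrix.one_apply_eq] using this
      refine ⟨ζ * c, by rw [mul_pow, hζ, hcn, one_mul], g', hg', ?_⟩
      show N * (ζ • g) * Nᴴ = (ζ * c) • g'
      rw [Matrix.mul_smul, Matrix.smul_mul, hEq, smul_smul]
    have hle : G''.ncard ≤ ((fun g => N * g * Nᴴ) '' G'').ncard := by
      rw [Set.ncard_image_of_injective _ hinj]
    exact Set.eq_of_subset_of_ncard_le hsub hle hfinG''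
  · -- backward direction
    intro hIm g hg
    have hgG'' : g ∈ G'' := ⟨1, one_pow n, g, hg, (one_smul ℂ g).symm⟩
    have : N * g * Nᴴ ∈ G'' := by
      rw [← hIm]; exact ⟨g, hgG'', rfl⟩
    obtain ⟨ζ, hζ, g', hg', hEq⟩ := this
    refine ⟨g', hg', ζ, ?_, hEq⟩
    have habs : ‖ζ‖ ^ n = 1 := by
      rw [← norm_pow, hζ, norm_one]
    exact (pow_eq_one_iff_of_nonneg (norm_nonneg ζ) hn0.ne').mp habs
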